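/- For any α ∈ ℝ³, the Jones rotation R(α) = exp(−i α·σ) and the Mueller rotation M(α) = exp(2[α]×) satisfy the covariance relation S(R(α)x) = M(α)S(x) for all x ∈ ℂ², where S denotes the Stokes map. -/

import Mathlib

open Matrix

/-- The Pauli matrices `σ₁, σ₂, σ₃`. -/
noncomputable def pauli : Fin 3 → Matrix (Fin 2) (Fin 2) ℂ :=
  ![!![1, 0; 0, -1], !![0, 1; 1, 0], !![0, -Complex.I; Complex.I, 0]]

/-- `v·σ = v₁σ₁ + v₂σ₂ + v₃σ₃` for a real vector `v`. -/
noncomputable def pdot (v : Fin 3 → ℝ) : Matrix (Fin 2) (Fin 2) ℂ :=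
  (v 0 : ℂ) • pauli 0 + (v 1 : ℂ) • pauli 1 + (v 2 : ℂ) • pauli 2

/-- The cross-product matrix `[α]×`. -/
def crossMat (a : Fin 3 → ℝ) : Matrix (Fin 3) (Fin 3) ℝ :=
  !![0, -a 2, a 1; a 2, 0, -a 0; -a 1, a 0, 0]

/-- The Stokes map `S(x) = (xᴴσ₁x, xᴴσ₂x, xᴴσ₃x)`. -/
noncomputable def stokes (x : Fin 2 → ℂ) : Fin 3 → ℝ :=
  ![‖x 0‖ ^ 2 - ‖x 1‖ ^ 2,
    2 * (x 0 * star (x 1)).re,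
    -2 * (x 0 * star (x 1)).im]

namespace StokesAux

attribute [local instance] Matrix.linftyOpNormedRing Matrix.linftyOpNormedAlgebra
  Matrix.linftyOpNormedSpace

open NormedSpace

abbrev matTop {m n R : Type*} [TopologicalSpace R] : TopologicalSpace (Matrix m n R) :=
  Pi.topologicalSpace

abbrev matUnif {m n R : Type*} [UniformSpace R] : UniformSpace (Matrix m n R) :=
  Pi.uniformSpace _

attribute [local instance] matTop matUnif

noncomputable abbrev V := Matrix (Fin 2) (Fin 2) ℂ

noncomputable def lhom : V →+* (V →L[ℂ] V) where
  toFun B := ContinuousLinearMap.mul ℂ V B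
  map_one' := by ext x : 1; simp [ContinuousLinearMap.mul_apply']
  map_mul' a b := by ext x : 1; simp [ContinuousLinearMap.mul_apply', mul_assoc]
  map_zero' := by ext x : 1; simp [ContinuousLinearMap.mul_apply']
  map_add' a b := by ext x : 1; simp [ContinuousLinearMap.mul_apply', add_mul]

noncomputable def rhom : Vᵐᵒᵖ →+* (V →L[ℂ] V) where
  toFun B := (ContinuousLinearMap.mul ℂ V).flip B.unop
  map_one' := by ext x : 1; simp [ContinuousLinearMap.mul_apply']
  map_mul' a b := by ext x : 1; simp [ContinuousLinearMap.mul_apply', mul_assoc]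
  map_zero' := by ext x : 1; simp [ContinuousLinearMap.mul_apply']
  map_add' a b := by ext x : 1; simp [ContinuousLinearMap.mul_apply', mul_add]

@[simp] lemma lhom_apply (B X : V) : lhom B X = B * X := rfl
@[simp] lemma rhom_apply (B : Vᵐᵒᵖ) (X : V) : rhom B X = X * B.unop := rfl

lemma lhom_continuous : Continuous lhom := (ContinuousLinearMap.mul ℂ V).continuous

lemma rhom_continuous : Continuous rhom :=
  ((ContinuousLinearMap.mul ℂ V).flip.continuous).comp MulOpposite.continuous_unop

lemma hadamard (A X : V) :
    exp (-A) * X * exp A =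
      exp (lhom (-A) + rhom (MulOpposite.op A)) X := by
  have hc : Commute (lhom (-A)) (rhom (MulOpposite.op A)) := by
    ext x; simp [ContinuousLinearMap.mul_apply, mul_assoc]
  let +nondep : NormedAlgebra ℚ (V →L[ℂ] V) := .restrictScalars ℚ ℂ (V →L[ℂ] V)
  rw [NormedSpace.exp_add_of_commute (𝔸 := V →L[ℂ] V) hc,
    ← NormedSpace.map_exp (𝔸 := V) (𝔹 := V →L[ℂ] V) lhom lhom_continuous,
    ← NormedSpace.map_exp (𝔸 := Vᵐᵒᵖ) (𝔹 := V →L[ℂ] V) rhom rhom_continuous,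
    ContinuousLinearMap.mul_apply]
  simp [exp_op, mul_assoc]

lemma pdot_conjTranspose (v : Fin 3 → ℝ) : (pdot v)ᴴ = pdot v := by
  ext i j
  fin_cases i <;> fin_cases j <;>
    simp [pdot, pauli, conjTranspose_apply, Complex.ext_iff]

lemma ad_pauli (α : Fin 3 → ℝ) (k : Fin 3) :
    (Complex.I • pdot α) * pauli k + pauli k * (-(Complex.I • pdot α)) =
      ∑ l : Fin 3, (((2 : ℝ) • crossMat α) k l) • pauli l := by
  fin_cases k <;> ext i j <;> fin_cases i <;> fin_cases j <;>
    simp [pdot, pauli, crossMat, Matrix.mul_apply, Fin.sum_univ_succ, Complex.ext_iff] <;>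
    (try constructor) <;> first | trivial | ring

lemma stokes_eq (x : Fin 2 → ℂ) (k : Fin 3) :
    stokes x k = (star x ⬝ᵥ (pauli k).mulVec x).re := by
  fin_cases k <;>
    simp [stokes, pauli, dotProduct, mulVec, Fin.sum_univ_succ,
      Complex.sq_norm, Complex.normSq_apply, Complex.mul_re, Complex.mul_im] <;> ring

section Main

variable (α : Fin 3 → ℝ)

noncomputable def A : V := -(Complex.I • pdot α)

noncomputable def ad : V →L[ℂ] V := lhom (-(A α)) + rhom (MulOpposite.op (A α))

noncomputable def N : Matrix (Fin 3) (Fin 3) ℝ := (2 : ℝ) • crossMat α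

lemma ad_pauli' (k : Fin 3) :
    ad α (pauli k) = ∑ l : Fin 3, (N α k l) • pauli l := by
  have h := ad_pauli α k
  simp only [ad, N, A, neg_neg, ContinuousLinearMap.add_apply, lhom_apply, rhom_apply,
    MulOpposite.unop_op]
  exact h

lemma ad_pow_pauli (n : ℕ) (k : Fin 3) :
    (ad α ^ n) (pauli k) = ∑ l : Fin 3, ((N α ^ n) k l) • pauli l := by
  induction n generalizing k with
  | zero =>
    simp [Matrix.one_apply, ite_smul]
  | succ n ih =>
    rw [pow_succ, ContinuousLinearMap.mul_apply, ad_pauli', map_sum]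
    have : ∀ l, (ad α ^ n) ((N α k l) • pauli l) = (N α k l) • (ad α ^ n) (pauli l) :=
      fun l => (ad α ^ n).map_smul_of_tower _ _
    simp_rw [this, ih, Finset.smul_sum, smul_smul, pow_succ', Matrix.mul_apply,
      Finset.sum_smul]
    exact Finset.sum_comm

lemma exp_ad_pauli (k : Fin 3) :
    exp (ad α) (pauli k) = ∑ l : Fin 3, ((exp (N α)) k l) • pauli l := by
  have hs : HasSum (fun n : ℕ => ((n.factorial : ℂ))⁻¹ • ad α ^ n) (exp (ad α)) :=
    exp_series_hasSum_exp' (ad α)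
  have h1 : HasSum (fun n : ℕ => ((n.factorial : ℂ))⁻¹ • (ad α ^ n) (pauli k))
      ((exp (ad α)) (pauli k)) := by
    have := hs.mapL (ContinuousLinearMap.apply ℂ V (pauli k))
    simpa using this
  have hN : HasSum (fun n : ℕ => ((n.factorial : ℝ))⁻¹ • (N α ^ n)) (exp (N α)) :=
    exp_series_hasSum_exp' (N α)
  let g : Matrix (Fin 3) (Fin 3) ℝ →ₗ[ℝ] V :=
    { toFun := fun B => ∑ l : Fin 3, B k l • pauli l
      map_add' := fun B C => by simp [add_smul, Finset.sum_add_distrib]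
      map_smul' := fun r B => by simp [Finset.smul_sum, smul_smul] }
  have h2 := hN.mapL (LinearMap.toContinuousLinearMap g)
  have heq : (fun n : ℕ => ((n.factorial : ℂ))⁻¹ • (ad α ^ n) (pauli k)) =
      fun n : ℕ => (LinearMap.toContinuousLinearMap g) (((n.factorial : ℝ))⁻¹ • (N α ^ n)) := by
    funext n
    rw [ad_pow_pauli]
    simp only [LinearMap.coe_toContinuousLinearMap', LinearMap.coe_mk, AddHom.coe_mk, g,
      Matrix.smul_apply, smul_eq_mul, Finset.smul_sum, smul_smul]
    congr 1
    funext l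
    rw [show ((n.factorial : ℂ))⁻¹ = (((n.factorial)⁻¹ : ℝ) : ℂ) by push_cast; ring]
    rw [Complex.coe_smul, smul_smul]
  rw [heq] at h1
  have := h1.unique h2
  rw [this]
  simp [g]

lemma conj_pauli (k : Fin 3) :
    (exp (A α))ᴴ * pauli k * exp (A α) =
      ∑ l : Fin 3, ((exp (N α)) k l) • pauli l := by
  have hAH : (A α)ᴴ = -(A α) := by
    simp [A, pdot_conjTranspose, Complex.star_def]
  have h1 : (exp (A α))ᴴ = exp (-(A α)) := by
    rw [← hAH]; exact (Matrix.exp_conjTranspose _).symm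
  rw [h1, hadamard, ← ad, exp_ad_pauli]

end Main

end StokesAux

/-- Covariance of the Jones rotation `R(α) = exp(−iα·σ)` and Mueller rotation
`M(α) = exp(2[α]×)`: `S(R(α)x) = M(α)S(x)` for all `x ∈ ℂ²`. -/
theorem stokes_covariance (α : Fin 3 → ℝ) (x : Fin 2 → ℂ) :
    stokes ((NormedSpace.exp (-(Complex.I • pdot α))).mulVec x) =
      (NormedSpace.exp ((2 : ℝ) • crossMat α)).mulVec (stokes x) := by
  funext k
  have hR : NormedSpace.exp (-(Complex.I • pdot α)) = NormedSpace.exp (StokesAux.A α) := rfl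
  rw [StokesAux.stokes_eq, hR]
  set R := NormedSpace.exp (StokesAux.A α) with hRdef
  rw [star_mulVec, ← dotProduct_mulVec, mulVec_mulVec, mulVec_mulVec,
    show Rᴴ * pauli k * R = ∑ l : Fin 3, ((NormedSpace.exp (StokesAux.N α)) k l) • pauli l
      from StokesAux.conj_pauli α k]
  have hM : NormedSpace.exp ((2 : ℝ) • crossMat α) = NormedSpace.exp (StokesAux.N α) := rfl
  rw [hM]
  set M := NormedSpace.exp (StokesAux.N α) with hMdef
  have hsum : (∑ l : Fin 3, M k l • pauli l) *ᵥ x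
      = ∑ l : Fin 3, M k l • (pauli l *ᵥ x) := by
    funext i
    simp only [Matrix.mulVec, dotProduct, Finset.sum_apply, Matrix.sum_apply,
      Matrix.smul_apply, Pi.smul_apply, Finset.sum_mul, smul_mul_assoc, Finset.smul_sum]
    exact Finset.sum_comm
  rw [hsum]
  have hdot : star x ⬝ᵥ ∑ l : Fin 3, M k l • (pauli l *ᵥ x)
      = ∑ l : Fin 3, M k l • (star x ⬝ᵥ (pauli l *ᵥ x)) := by
    simp only [dotProduct, Finset.sum_apply, Pi.smul_apply, Finset.mul_sum, mul_smul_comm,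
      Finset.smul_sum]
    rw [Finset.sum_comm]
  rw [hdot, Complex.re_sum]
  simp only [Matrix.mulVec, dotProduct, StokesAux.stokes_eq, Complex.smul_re, smul_eq_mul,
    Complex.mul_re, Fin.sum_univ_succ, Finset.sum_empty, Fin.isValue, star,
    Finset.univ_eq_empty, add_zero]
  try refine Finset.sum_congr rfl fun l _ => ?_
  try simp [Complex.mul_re, Fin.sum_univ_succ, RCLike.star_def, Complex.conj_re, Complex.conj_im]
  try ring
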